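/- arXiv:1206.2829 — 4 statements merged into one kernel-verified Lean document; each statement's English description precedes it below -/
import Mathlib

section
/- Fix real t > 0, a natural number n, and real numbers H and R. For N > 0 set ǧ₀₀(N) = N/(2t³) + R/t + (n+1)/(2t²) and σ(N) = √(1/t + H²/(t²·ǧ₀₀(N))). Then, as N → ∞, the derivative of the canonical expanding soliton potential in the direction of the space-time unit normal, ν^Σ f̌ = H·N/(2t³·ǧ₀₀(N)·σ(N)), converges to H·√t. -/
open Filter Topology

/-- For the canonical expanding Ricci soliton with time-time component
`ǧ₀₀(N) = N/(2t³) + R/t + (n+1)/(2t²)`, potential `f̌ = −N/(2t)` and normal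
normalizing factor `σ(N) = √(1/t + H²/(t²·ǧ₀₀(N)))`, the normal derivative of
the potential `ν^Σ f̌ = H·N/(2t³·ǧ₀₀(N)·σ(N))` converges to `H·√t` as `N → ∞`. -/
theorem stmt_5 (t : ℝ) (ht : 0 < t) (n : ℕ) (H R : ℝ) :
    Tendsto
      (fun N : ℝ =>
        H * N / (2 * t ^ 3 * (N / (2 * t ^ 3) + R / t + ((n : ℝ) + 1) / (2 * t ^ 2)) *
          Real.sqrt (1 / t +
            H ^ 2 / (t ^ 2 * (N / (2 * t ^ 3) + R / t + ((n : ℝ) + 1) / (2 * t ^ 2))))))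
      atTop (𝓝 (H * Real.sqrt t)) := by
  have ht0 : t ≠ 0 := ht.ne'
  set c : ℝ := 2 * t ^ 2 * R + t * ((n : ℝ) + 1) with hc
  have hX : ∀ N : ℝ,
      2 * t ^ 3 * (N / (2 * t ^ 3) + R / t + ((n : ℝ) + 1) / (2 * t ^ 2)) = N + c := by
    intro N; field_simp; ring
  have hg : ∀ N : ℝ,
      t ^ 2 * (N / (2 * t ^ 3) + R / t + ((n : ℝ) + 1) / (2 * t ^ 2)) = (N + c) / (2 * t) := by
    intro N; field_simp; ring
  have heq : (fun N : ℝ =>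
        H * N / (2 * t ^ 3 * (N / (2 * t ^ 3) + R / t + ((n : ℝ) + 1) / (2 * t ^ 2)) *
          Real.sqrt (1 / t +
            H ^ 2 / (t ^ 2 * (N / (2 * t ^ 3) + R / t + ((n : ℝ) + 1) / (2 * t ^ 2)))))) =
      fun N : ℝ => (H * N / (N + c)) / Real.sqrt (1 / t + H ^ 2 / ((N + c) / (2 * t))) := by
    funext N
    rw [hX, hg, ← div_div]
  rw [heq]
  have h1 : Tendsto (fun N : ℝ => H * N / (N + c)) atTop (𝓝 H) := by
    have hinv : Tendsto (fun N : ℝ => H * (1 + c / N)⁻¹) atTop (𝓝 (H * (1 + 0)⁻¹)) :=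
      tendsto_const_nhds.mul ((tendsto_const_nhds.add
        (tendsto_const_nhds.div_atTop tendsto_id)).inv₀ (by norm_num))
    have hcong : (fun N : ℝ => H * (1 + c / N)⁻¹) =ᶠ[atTop] fun N => H * N / (N + c) := by
      filter_upwards [eventually_gt_atTop (max 0 (-c))] with N hN
      have hN0 : N ≠ 0 := (lt_of_le_of_lt (le_max_left _ _) hN).ne'
      have hNc : N + c ≠ 0 := by
        have : -c < N := lt_of_le_of_lt (le_max_right _ _) hN
        intro h; rw [add_eq_zero_iff_eq_neg] at h; exact this.ne' h
      field_simp
    simpa using hinv.congr' hcong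
  have h2 : Tendsto (fun N : ℝ => Real.sqrt (1 / t + H ^ 2 / ((N + c) / (2 * t)))) atTop
      (𝓝 (Real.sqrt (1 / t))) := by
    have hA : Tendsto (fun N : ℝ => (N + c) / (2 * t)) atTop atTop :=
      (tendsto_atTop_add_const_right _ c tendsto_id).atTop_div_const (by positivity)
    have h3 : Tendsto (fun N : ℝ => 1 / t + H ^ 2 / ((N + c) / (2 * t))) atTop (𝓝 (1 / t + 0)) :=
      tendsto_const_nhds.add (tendsto_const_nhds.div_atTop hA)
    have := (Real.continuous_sqrt.continuousAt (x := 1 / t + 0)).tendsto.comp h3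
    simpa [Function.comp_def] using this
  have hs : Real.sqrt (1 / t) ≠ 0 := by positivity
  have := h1.div h2 hs
  have hval : H / Real.sqrt (1 / t) = H * Real.sqrt t := by
    rw [one_div, Real.sqrt_inv, div_eq_mul_inv, inv_inv]
  rwa [hval] at this
end

section
/- Fix real t > 0, a natural number n, and real numbers H and R. For N > 0 set ǧ₀₀(N) = N/(2t³) + R/t + (n+1)/(2t²) and σ(N) = √(1/t + H²/(t²·ǧ₀₀(N))). Then, as N → ∞, the quantity N·(H/σ(N) − H·N/(2t³·ǧ₀₀(N)·σ(N))) converges to H·t^{3/2}·(2tR + n + 1). In particular the soliton defect Ě(N) = H^Σ − ν^Σ f̌ = H/σ(N) − H·N/(2t³·ǧ₀₀(N)·σ(N)) satisfies N·|Ě(N)| bounded as N → ∞, which is the scalar core of the statement that the space-time track of the mean curvature flow is an approximate soliton inside the canonical expanding Ricci soliton (Theorem 3.1). -/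
open Filter Topology

lemma stmt_6_aux1 (N p b s c H : ℝ) (hp : p ≠ 0) (hb : b ≠ 0) (hs : s ≠ 0)
    (hpb : p * b = N + p * c) :
    N * (H / s - H * N / (p * b * s)) = N / b * (H * c) / s := by
  field_simp
  linear_combination (N * H) * hpb

lemma stmt_6_aux2 (N p b c : ℝ) (hb : b ≠ 0) (hpb : p * b = N + p * c) :
    p * (1 - c / b) = N / b := by
  field_simp
  linarith

/-- Scalar core of Theorem 3.1: with `ǧ₀₀(N) = N/(2t³) + R/t + (n+1)/(2t²)` and
`σ(N) = √(1/t + H²/(t²·ǧ₀₀(N)))`, the soliton defect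
`Ě(N) = H/σ(N) − H·N/(2t³·ǧ₀₀(N)·σ(N))` satisfies
`N·Ě(N) → H·t^{3/2}·(2tR + n + 1)` as `N → ∞`; in particular `N·|Ě(N)|` is
eventually bounded. -/
theorem stmt_6 (t : ℝ) (ht : 0 < t) (n : ℕ) (H R : ℝ) :
    Tendsto
      (fun N : ℝ =>
        N * (H / Real.sqrt (1 / t +
              H ^ 2 / (t ^ 2 * (N / (2 * t ^ 3) + R / t + ((n : ℝ) + 1) / (2 * t ^ 2)))) -
          H * N / (2 * t ^ 3 * (N / (2 * t ^ 3) + R / t + ((n : ℝ) + 1) / (2 * t ^ 2)) *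
            Real.sqrt (1 / t +
              H ^ 2 / (t ^ 2 * (N / (2 * t ^ 3) + R / t + ((n : ℝ) + 1) / (2 * t ^ 2)))))))
      atTop (𝓝 (H * t ^ ((3 : ℝ) / 2) * (2 * t * R + (n : ℝ) + 1))) ∧
    ∃ C : ℝ, ∀ᶠ N : ℝ in atTop,
      N * |H / Real.sqrt (1 / t +
              H ^ 2 / (t ^ 2 * (N / (2 * t ^ 3) + R / t + ((n : ℝ) + 1) / (2 * t ^ 2)))) -
          H * N / (2 * t ^ 3 * (N / (2 * t ^ 3) + R / t + ((n : ℝ) + 1) / (2 * t ^ 2)) *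
            Real.sqrt (1 / t +
              H ^ 2 / (t ^ 2 * (N / (2 * t ^ 3) + R / t + ((n : ℝ) + 1) / (2 * t ^ 2)))))| ≤ C := by
  have ht' : t ≠ 0 := ht.ne'
  set c : ℝ := R / t + ((n : ℝ) + 1) / (2 * t ^ 2) with hcdef
  set g : ℝ → ℝ := fun N => N / (2 * t ^ 3) + R / t + ((n : ℝ) + 1) / (2 * t ^ 2) with hgdef
  set σ : ℝ → ℝ := fun N => Real.sqrt (1 / t + H ^ 2 / (t ^ 2 * g N)) with hσdef
  have hgc : ∀ N : ℝ, g N = N / (2 * t ^ 3) + c := by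
    intro N; simp only [hgdef, hcdef]; ring
  have hpb : ∀ N : ℝ, 2 * t ^ 3 * g N = N + 2 * t ^ 3 * c := by
    intro N; rw [hgc]; field_simp
  have hg : Tendsto g atTop atTop := by
    have h1 : Tendsto (fun N : ℝ => N / (2 * t ^ 3)) atTop atTop :=
      tendsto_id.atTop_div_const (by positivity)
    have := tendsto_atTop_add_const_right atTop c h1
    exact this.congr fun N => (hgc N).symm
  have hgpos : ∀ᶠ N : ℝ in atTop, 0 < g N := hg.eventually_gt_atTop 0
  -- σ limit
  have hinner : Tendsto (fun N : ℝ => 1 / t + H ^ 2 / (t ^ 2 * g N)) atTop (𝓝 (1 / t)) := by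
    have h0 : Tendsto (fun N : ℝ => H ^ 2 / (t ^ 2 * g N)) atTop (𝓝 0) :=
      Tendsto.div_atTop tendsto_const_nhds (hg.const_mul_atTop (by positivity))
    simpa using tendsto_const_nhds.add h0
  have hσ : Tendsto σ atTop (𝓝 (Real.sqrt (1 / t))) := hinner.sqrt
  have hsqrt_pos : 0 < Real.sqrt (1 / t) := Real.sqrt_pos.mpr (by positivity)
  have hσpos : ∀ᶠ N : ℝ in atTop, 0 < σ N := by
    filter_upwards [hgpos] with N hN
    apply Real.sqrt_pos.mpr
    have h2 : 0 ≤ H ^ 2 / (t ^ 2 * g N) := by positivity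
    have h1t : 0 < 1 / t := by positivity
    linarith
  -- N / g N → 2 t³
  have hcg : Tendsto (fun N : ℝ => c / g N) atTop (𝓝 0) :=
    Tendsto.div_atTop tendsto_const_nhds hg
  have hNg : Tendsto (fun N : ℝ => N / g N) atTop (𝓝 (2 * t ^ 3)) := by
    have h1 : Tendsto (fun N : ℝ => 2 * t ^ 3 * (1 - c / g N)) atTop
        (𝓝 (2 * t ^ 3 * (1 - 0))) :=
      (((tendsto_const_nhds : Tendsto (fun _ : ℝ => (1 : ℝ)) atTop (𝓝 1)).sub
        hcg).const_mul (2 * t ^ 3))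
    rw [sub_zero, mul_one] at h1
    refine Tendsto.congr' ?_ h1
    filter_upwards [hgpos] with N hN
    exact stmt_6_aux2 N (2 * t ^ 3) (g N) c hN.ne' (hpb N)
  -- main limit
  have hG : Tendsto (fun N : ℝ => N / g N * (H * c) / σ N) atTop
      (𝓝 (2 * t ^ 3 * (H * c) / Real.sqrt (1 / t))) :=
    (hNg.mul_const (H * c)).div hσ hsqrt_pos.ne'
  have hLeq : 2 * t ^ 3 * (H * c) / Real.sqrt (1 / t) =
      H * t ^ ((3 : ℝ) / 2) * (2 * t * R + (n : ℝ) + 1) := by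
    have hrpow : t ^ ((3 : ℝ) / 2) = t * Real.sqrt t := by
      rw [show (3 : ℝ) / 2 = (1 : ℝ) + 1 / 2 by norm_num, Real.rpow_add ht, Real.rpow_one,
        ← Real.sqrt_eq_rpow]
    have hs : Real.sqrt t ≠ 0 := (Real.sqrt_pos.mpr ht).ne'
    have h1t : Real.sqrt (1 / t) = (Real.sqrt t)⁻¹ := by rw [one_div, Real.sqrt_inv]
    rw [hrpow, h1t, hcdef]
    field_simp
    ring
  have hmain : Tendsto
      (fun N : ℝ => N * (H / σ N - H * N / (2 * t ^ 3 * g N * σ N))) atTop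
      (𝓝 (H * t ^ ((3 : ℝ) / 2) * (2 * t * R + (n : ℝ) + 1))) := by
    rw [← hLeq]
    refine Tendsto.congr' ?_ hG
    filter_upwards [hgpos, hσpos] with N hN hσN
    exact (stmt_6_aux1 N (2 * t ^ 3) (g N) (σ N) c H (by positivity) hN.ne' hσN.ne'
      (hpb N)).symm
  refine ⟨hmain, ⟨|H * t ^ ((3 : ℝ) / 2) * (2 * t * R + (n : ℝ) + 1)| + 1, ?_⟩⟩
  have habs := hmain.abs
  have hev := habs.eventually (eventually_le_nhds
    (lt_add_one |H * t ^ ((3 : ℝ) / 2) * (2 * t * R + (n : ℝ) + 1)|))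
  filter_upwards [hev, eventually_ge_atTop (0 : ℝ)] with N h1 h2
  calc N * |H / σ N - H * N / (2 * t ^ 3 * g N * σ N)|
      = |N * (H / σ N - H * N / (2 * t ^ 3 * g N * σ N))| := by
        rw [abs_mul, abs_of_nonneg h2]
    _ ≤ _ := h1
end

section
/- Fix real τ > 0, a natural number n, and real numbers H and R. For N > 0 set ĝ₀₀(N) = N/(2τ³) + R/τ − (n+1)/(2τ²) and σ(N) = √(1/τ + H²/(τ²·ĝ₀₀(N))). Then, as N → ∞, H·N/(2τ³·ĝ₀₀(N)·σ(N)) converges to H·√τ; equivalently, the derivative of the canonical shrinking soliton potential in the direction of the space-time unit normal, ν^Σ f̂ = −H·N/(2τ³·ĝ₀₀(N)·σ(N)), converges to −H·√τ. -/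
open Filter Topology

/-- For the canonical shrinking Ricci soliton with time-time component
`ĝ₀₀(N) = N/(2τ³) + R/τ − (n+1)/(2τ²)`, potential `f̂ = N/(2τ)` and normal
normalizing factor `σ(N) = √(1/τ + H²/(τ²·ĝ₀₀(N)))`, the quantity
`H·N/(2τ³·ĝ₀₀(N)·σ(N))` converges to `H·√τ` as `N → ∞`; equivalently the
normal derivative of the potential `ν^Σ f̂ = −H·N/(2τ³·ĝ₀₀(N)·σ(N))` converges
to `−H·√τ`. -/
theorem stmt_10 (τ : ℝ) (hτ : 0 < τ) (n : ℕ) (H R : ℝ) :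
    Tendsto
      (fun N : ℝ =>
        H * N / (2 * τ ^ 3 * (N / (2 * τ ^ 3) + R / τ - ((n : ℝ) + 1) / (2 * τ ^ 2)) *
          Real.sqrt (1 / τ +
            H ^ 2 / (τ ^ 2 * (N / (2 * τ ^ 3) + R / τ - ((n : ℝ) + 1) / (2 * τ ^ 2))))))
      atTop (𝓝 (H * Real.sqrt τ)) ∧
    Tendsto
      (fun N : ℝ =>
        -(H * N / (2 * τ ^ 3 * (N / (2 * τ ^ 3) + R / τ - ((n : ℝ) + 1) / (2 * τ ^ 2)) *
          Real.sqrt (1 / τ +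
            H ^ 2 / (τ ^ 2 * (N / (2 * τ ^ 3) + R / τ - ((n : ℝ) + 1) / (2 * τ ^ 2)))))))
      atTop (𝓝 (-(H * Real.sqrt τ))) := by
  have hτ3 : (0:ℝ) < 2 * τ ^ 3 := by positivity
  set c : ℝ := R / τ - ((n : ℝ) + 1) / (2 * τ ^ 2) with hc
  have hg : Tendsto (fun N : ℝ => N / (2 * τ ^ 3) + c) atTop atTop := by
    exact tendsto_atTop_add_const_right _ c (tendsto_id.atTop_div_const hτ3)
  -- first factor
  have h1 : Tendsto (fun N : ℝ => N / (2 * τ ^ 3 * (N / (2 * τ ^ 3) + c))) atTop (𝓝 1) := by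
    have hz : Tendsto (fun N : ℝ => (2 * τ ^ 3 * c) / (N + 2 * τ ^ 3 * c)) atTop (𝓝 0) :=
      Tendsto.div_atTop tendsto_const_nhds
        (tendsto_atTop_add_const_right _ (2 * τ ^ 3 * c) tendsto_id)
    have h1' : Tendsto (fun N : ℝ => 1 - (2 * τ ^ 3 * c) / (N + 2 * τ ^ 3 * c)) atTop (𝓝 1) := by
      simpa using (tendsto_const_nhds (x := (1:ℝ)) (f := atTop)).sub hz
    refine h1'.congr' ?_
    filter_upwards [eventually_gt_atTop (|2 * τ ^ 3 * c| + 1)] with N hN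
    have hNe : N + 2 * τ ^ 3 * c ≠ 0 := by
      nlinarith [neg_abs_le (2 * τ ^ 3 * c)]
    have hrw : 2 * τ ^ 3 * (N / (2 * τ ^ 3) + c) = N + 2 * τ ^ 3 * c := by
      field_simp
    rw [hrw, eq_div_iff hNe, sub_mul, one_mul, div_mul_cancel₀ _ hNe]
    ring
  -- second factor
  have h2 : Tendsto (fun N : ℝ => Real.sqrt (1 / τ + H ^ 2 / (τ ^ 2 * (N / (2 * τ ^ 3) + c))))
      atTop (𝓝 (Real.sqrt (1 / τ))) := by
    have hz : Tendsto (fun N : ℝ => H ^ 2 / (τ ^ 2 * (N / (2 * τ ^ 3) + c))) atTop (𝓝 0) :=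
      Tendsto.div_atTop tendsto_const_nhds (hg.const_mul_atTop (by positivity))
    have hadd : Tendsto (fun N : ℝ => 1 / τ + H ^ 2 / (τ ^ 2 * (N / (2 * τ ^ 3) + c)))
        atTop (𝓝 (1 / τ + 0)) :=
      (tendsto_const_nhds (x := 1 / τ) (f := atTop)).add hz
    rw [add_zero] at hadd
    exact (Real.continuous_sqrt.continuousAt.tendsto.comp hadd)
  have key : Tendsto
      (fun N : ℝ =>
        H * N / (2 * τ ^ 3 * (N / (2 * τ ^ 3) + c) *
          Real.sqrt (1 / τ + H ^ 2 / (τ ^ 2 * (N / (2 * τ ^ 3) + c)))))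
      atTop (𝓝 (H * Real.sqrt τ)) := by
    have hsq : (Real.sqrt (1 / τ))⁻¹ = Real.sqrt τ := by
      rw [one_div, Real.sqrt_inv, inv_inv]
    have := (((tendsto_const_nhds (x := H) (f := atTop)).mul h1).mul
      ((continuousAt_inv₀ (by positivity : Real.sqrt (1/τ) ≠ 0)).tendsto.comp h2))
    simp only [mul_one] at this
    rw [hsq] at this
    refine this.congr fun N => ?_
    simp only [Function.comp, div_eq_mul_inv, mul_inv]
    ring
  refine ⟨key.congr fun N => ?_, key.neg.congr fun N => ?_⟩ <;>
    · simp only [hc, ← add_sub_assoc]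
end

section
/- Fix real τ > 0, a natural number n, and real numbers H and R. For N > 0 set ĝ₀₀(N) = N/(2τ³) + R/τ − (n+1)/(2τ²) and σ(N) = √(1/τ + H²/(τ²·ĝ₀₀(N))). Then, as N → ∞, the quantity N·(H/σ(N) − H·N/(2τ³·ĝ₀₀(N)·σ(N))) converges to H·τ^{3/2}·(2τR − (n+1)). In particular the soliton defect Ê(N) = H^Σ + ν^Σ f̂ = H/σ(N) − H·N/(2τ³·ĝ₀₀(N)·σ(N)) satisfies N·|Ê(N)| bounded as N → ∞, which is the scalar core of the statement that the space-time track of the mean curvature flow is an approximate soliton inside the canonical shrinking Ricci soliton (Theorem 3.2). -/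
open Filter Topology

/-- Scalar core of Theorem 3.2: with `ĝ₀₀(N) = N/(2τ³) + R/τ − (n+1)/(2τ²)` and
`σ(N) = √(1/τ + H²/(τ²·ĝ₀₀(N)))`, the soliton defect
`Ê(N) = H/σ(N) − H·N/(2τ³·ĝ₀₀(N)·σ(N))` satisfies
`N·Ê(N) → H·τ^{3/2}·(2τR − (n+1))` as `N → ∞`; in particular `N·|Ê(N)|` is
eventually bounded. -/
theorem stmt_11 (τ : ℝ) (hτ : 0 < τ) (n : ℕ) (H R : ℝ) :
    Tendsto
      (fun N : ℝ =>
        N * (H / Real.sqrt (1 / τ +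
              H ^ 2 / (τ ^ 2 * (N / (2 * τ ^ 3) + R / τ - ((n : ℝ) + 1) / (2 * τ ^ 2)))) -
          H * N / (2 * τ ^ 3 * (N / (2 * τ ^ 3) + R / τ - ((n : ℝ) + 1) / (2 * τ ^ 2)) *
            Real.sqrt (1 / τ +
              H ^ 2 / (τ ^ 2 * (N / (2 * τ ^ 3) + R / τ - ((n : ℝ) + 1) / (2 * τ ^ 2)))))))
      atTop (𝓝 (H * τ ^ ((3 : ℝ) / 2) * (2 * τ * R - ((n : ℝ) + 1)))) ∧
    ∃ C : ℝ, ∀ᶠ N : ℝ in atTop,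
      N * |H / Real.sqrt (1 / τ +
              H ^ 2 / (τ ^ 2 * (N / (2 * τ ^ 3) + R / τ - ((n : ℝ) + 1) / (2 * τ ^ 2)))) -
          H * N / (2 * τ ^ 3 * (N / (2 * τ ^ 3) + R / τ - ((n : ℝ) + 1) / (2 * τ ^ 2)) *
            Real.sqrt (1 / τ +
              H ^ 2 / (τ ^ 2 * (N / (2 * τ ^ 3) + R / τ - ((n : ℝ) + 1) / (2 * τ ^ 2)))))| ≤ C := by
  have hτ' : τ ≠ 0 := hτ.ne'
  set g : ℝ → ℝ := fun N => N / (2 * τ ^ 3) + R / τ - ((n : ℝ) + 1) / (2 * τ ^ 2)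
    with hgdef
  set σ : ℝ → ℝ := fun N => Real.sqrt (1 / τ + H ^ 2 / (τ ^ 2 * g N)) with hσdef
  set c : ℝ := R / τ - ((n : ℝ) + 1) / (2 * τ ^ 2) with hc
  clear_value c
  have hgc : ∀ N : ℝ, g N = N / (2 * τ ^ 3) + c := by
    intro N; simp only [hgdef]; rw [hc]; ring
  have hτ3 : (0:ℝ) < 2 * τ ^ 3 := by positivity
  -- g tends to atTop
  have hg : Tendsto g atTop atTop := by
    have : Tendsto (fun N : ℝ => N / (2 * τ ^ 3) + c) atTop atTop :=
      tendsto_atTop_add_const_right _ _ (tendsto_id.atTop_div_const hτ3)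
    exact this.congr (fun N => (hgc N).symm)
  have hgpos : ∀ᶠ N : ℝ in atTop, 0 < g N := hg.eventually_gt_atTop 0
  -- σ tends to sqrt(1/τ)
  have hin : Tendsto (fun N => 1 / τ + H ^ 2 / (τ ^ 2 * g N)) atTop (𝓝 (1 / τ)) := by
    have h0 : Tendsto (fun N => H ^ 2 / (τ ^ 2 * g N)) atTop (𝓝 0) := by
      apply Tendsto.div_atTop tendsto_const_nhds
      exact Tendsto.const_mul_atTop (by positivity) hg
    simpa using tendsto_const_nhds.add h0
  have hσ : Tendsto σ atTop (𝓝 (Real.sqrt (1 / τ))) :=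
    (Real.continuous_sqrt.continuousAt.tendsto).comp hin
  have hsqrtτ : Real.sqrt (1 / τ) ≠ 0 := by positivity
  -- N / g N → 2 τ³
  have hNg : Tendsto (fun N : ℝ => N / g N) atTop (𝓝 (2 * τ ^ 3)) := by
    have h1 : Tendsto (fun N : ℝ => g N / N) atTop (𝓝 (1 / (2 * τ ^ 3))) := by
      have heq1 : ∀ᶠ N : ℝ in atTop, g N / N = 1 / (2 * τ ^ 3) + c / N := by
        filter_upwards [eventually_gt_atTop (0:ℝ)] with N hN
        rw [hgc N]
        field_simp
      rw [tendsto_congr' heq1]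
      have hx : Tendsto (fun N : ℝ => 1 / (2 * τ ^ 3) + c / N) atTop
          (𝓝 (1 / (2 * τ ^ 3) + 0)) :=
        Tendsto.add tendsto_const_nhds (Tendsto.div_atTop tendsto_const_nhds tendsto_id)
      simpa using hx
    have h2 := h1.inv₀ (by positivity)
    have heq2 : ∀ᶠ N : ℝ in atTop, (g N / N)⁻¹ = N / g N := by
      filter_upwards [eventually_gt_atTop (0:ℝ)] with N hN
      rw [inv_div]
    rw [← tendsto_congr' heq2]
    simpa using h2
  -- eventual equality with simplified expression
  have heq : ∀ᶠ N : ℝ in atTop,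
      N * (H / σ N - H * N / (2 * τ ^ 3 * g N * σ N))
        = H * (N / g N) * c / σ N := by
    filter_upwards [hgpos] with N hgN
    have hσpos : 0 < σ N := by
      apply Real.sqrt_pos.mpr
      have h1 : 0 ≤ H ^ 2 / (τ ^ 2 * g N) := by positivity
      have h2 : 0 < 1 / τ := by positivity
      linarith
    have hσne : σ N ≠ 0 := hσpos.ne'
    have hgne : g N ≠ 0 := hgN.ne'
    have key : 2 * τ ^ 3 * g N - N = 2 * τ ^ 3 * c := by
      rw [hgc N]; field_simp; ring
    clear_value σ
    clear_value g
    field_simp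
    linear_combination (N * H) * key
  -- main limit
  have hlim : Tendsto (fun N : ℝ => H * (N / g N) * c / σ N) atTop
      (𝓝 (H * (2 * τ ^ 3) * c / Real.sqrt (1 / τ))) :=
    ((tendsto_const_nhds.mul hNg).mul tendsto_const_nhds).div hσ hsqrtτ
  have hval : H * (2 * τ ^ 3) * c / Real.sqrt (1 / τ)
      = H * τ ^ ((3 : ℝ) / 2) * (2 * τ * R - ((n : ℝ) + 1)) := by
    have hst : Real.sqrt (1 / τ) = (Real.sqrt τ)⁻¹ := by
      rw [one_div, Real.sqrt_inv]
    have hrp : τ ^ ((3 : ℝ) / 2) = τ * Real.sqrt τ := by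
      rw [show (3:ℝ)/2 = 1 + 1/2 by norm_num, Real.rpow_add hτ, Real.rpow_one,
        ← Real.sqrt_eq_rpow]
    have hss : Real.sqrt τ * Real.sqrt τ = τ := Real.mul_self_sqrt hτ.le
    have hsne : Real.sqrt τ ≠ 0 := by positivity
    rw [hst, hrp, hc]
    field_simp
  have hmain : Tendsto
      (fun N : ℝ => N * (H / σ N - H * N / (2 * τ ^ 3 * g N * σ N)))
      atTop (𝓝 (H * τ ^ ((3 : ℝ) / 2) * (2 * τ * R - ((n : ℝ) + 1)))) := by
    rw [tendsto_congr' heq, ← hval]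
    exact hlim
  constructor
  · exact hmain
  · refine ⟨|H * τ ^ ((3 : ℝ) / 2) * (2 * τ * R - ((n : ℝ) + 1))| + 1, ?_⟩
    have habs := hmain.abs
    filter_upwards [habs.eventually (eventually_le_nhds (lt_add_one _)),
      eventually_ge_atTop (0:ℝ)] with N h1 h2
    calc N * |H / σ N - H * N / (2 * τ ^ 3 * g N * σ N)|
        = |N * (H / σ N - H * N / (2 * τ ^ 3 * g N * σ N))| := by
          rw [abs_mul, abs_of_nonneg h2]
      _ ≤ _ := h1
end
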